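/- Consider noise-free data: let Δ_r ∈ ℝ^{n_x×n_h}, H ∈ ℝ^{n_h×n}, Ẋ = Δ_r H, and let Λ = diag(λ_1,…,λ_n) with λ_i ≥ 0 and HΛH⊤ ≻ 0. Set E_e := HΛH⊤, F_e := −HΛẊ⊤, G_e := ẊΛẊ⊤ (the case δ = 0). Then the matrix inequality Δ E_e Δ⊤ + Δ F_e + F_e⊤ Δ⊤ + G_e ⪯ 0 has exactly one solution Δ ∈ ℝ^{n_x×n_h}, namely Δ = −F_e⊤ E_e^{−1}, and this solution equals Δ_r. -/

import Mathlib

open Matrix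

lemma psd_neg_zero {p : Type*} [Fintype p] [DecidableEq p] {S : Matrix p p ℝ}
    (h1 : S.PosSemidef) (h2 : (-S).PosSemidef) : S = 0 := by
  have hv : ∀ x : p → ℝ, S *ᵥ x = 0 := by
    intro x
    have a := h1.dotProduct_mulVec_nonneg x
    have b := h2.dotProduct_mulVec_nonneg x
    rw [neg_mulVec, dotProduct_neg] at b
    have : star x ⬝ᵥ S *ᵥ x = 0 := le_antisymm (by linarith) a
    exact (h1.dotProduct_mulVec_zero_iff x).mp this
  ext i j
  have := congrFun (hv (Pi.single j 1)) i
  simpa [mulVec_single] using this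

open scoped MatrixOrder in
lemma aux_zero {m p : Type*} [Fintype m] [DecidableEq m] [Fintype p] [DecidableEq p]
    {M : Matrix m p ℝ} {E : Matrix p p ℝ} (hE : E.PosDef)
    (h : (-(M * E * Mᵀ)).PosSemidef) : M = 0 := by
  have hpsd : (M * E * Mᵀ).PosSemidef := by
    have := (hE.posSemidef.mul_mul_conjTranspose_same M)
    simpa using this
  have h0 : M * E * Mᵀ = 0 := psd_neg_zero hpsd h
  set B := CFC.sqrt E with hB
  have hBB : B * B = E := CFC.sqrt_mul_sqrt_self E hE.posSemidef.nonneg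
  have hBh : Bᴴ = B := (CFC.sqrt_nonneg E).posSemidef.1
  have hz : (M * B) * (M * B)ᴴ = 0 := by
    rw [conjTranspose_mul, hBh, Matrix.mul_assoc, ← Matrix.mul_assoc B, hBB, ← Matrix.mul_assoc]
    simpa using h0
  have hMB : M * B = 0 := self_mul_conjTranspose_eq_zero.mp hz
  have hdet : IsUnit B.det := by
    have : B.det * B.det = E.det := by rw [← det_mul, hBB]
    have hEd : 0 < E.det := hE.det_pos
    refine isUnit_iff_ne_zero.mpr fun hc => ?_
    rw [hc, mul_zero] at this
    exact absurd this.symm (ne_of_gt hEd)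
  calc M = M * (B * B⁻¹) := by rw [mul_nonsing_inv _ hdet, Matrix.mul_one]
  _ = M * B * B⁻¹ := by rw [Matrix.mul_assoc]
  _ = 0 := by rw [hMB, Matrix.zero_mul]

/-- Noise-free data: `Ẋ = Δ_r H`, `Λ = diag(λᵢ)` with `λᵢ ≥ 0` and
`HΛHᵀ ≻ 0`. With `E_e := HΛHᵀ`, `F_e := −HΛẊᵀ`, `G_e := ẊΛẊᵀ` (the case `δ = 0`),
the inequality `Δ E_e Δᵀ + Δ F_e + F_eᵀ Δᵀ + G_e ⪯ 0` has exactly one solution,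
namely `Δ = −F_eᵀ E_e⁻¹ = Δ_r`. -/
theorem stmt9 (n_x n_u n : ℕ) (hx : 0 < n_x) (hu : 0 < n_u) (hn : 0 < n)
    (Δr : Matrix (Fin n_x) (Fin (n_x + n_u)) ℝ)
    (H : Matrix (Fin (n_x + n_u)) (Fin n) ℝ)
    (l : Fin n → ℝ) (hl : ∀ i, 0 ≤ l i)
    (hpd : (H * Matrix.diagonal l * Hᵀ).PosDef) :
    -((-(H * Matrix.diagonal l * (Δr * H)ᵀ))ᵀ * (H * Matrix.diagonal l * Hᵀ)⁻¹) = Δr ∧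
    ∀ Δ : Matrix (Fin n_x) (Fin (n_x + n_u)) ℝ,
      (-(Δ * (H * Matrix.diagonal l * Hᵀ) * Δᵀ + Δ * (-(H * Matrix.diagonal l * (Δr * H)ᵀ)) +
          (-(H * Matrix.diagonal l * (Δr * H)ᵀ))ᵀ * Δᵀ +
          (Δr * H) * Matrix.diagonal l * (Δr * H)ᵀ)).PosSemidef ↔ Δ = Δr := by
  set E := H * Matrix.diagonal l * Hᵀ with hE
  have hEsym : Eᵀ = E := by
    rw [hE, transpose_mul, transpose_mul, transpose_transpose, diagonal_transpose,
      Matrix.mul_assoc]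
  have hF : H * Matrix.diagonal l * (Δr * H)ᵀ = E * Δrᵀ := by
    rw [transpose_mul, hE, ← Matrix.mul_assoc]
  have hG : (Δr * H) * Matrix.diagonal l * (Δr * H)ᵀ = Δr * E * Δrᵀ := by
    rw [hE]
    simp only [Matrix.mul_assoc, transpose_mul]
  have hdet : IsUnit E.det := isUnit_iff_ne_zero.mpr (ne_of_gt hpd.det_pos)
  have key : ∀ Δ : Matrix (Fin n_x) (Fin (n_x + n_u)) ℝ,
      Δ * E * Δᵀ + Δ * (-(E * Δrᵀ)) + (-(E * Δrᵀ))ᵀ * Δᵀ + Δr * E * Δrᵀ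
        = (Δ - Δr) * E * (Δ - Δr)ᵀ := by
    intro Δ
    simp only [transpose_neg, transpose_mul, transpose_transpose, hEsym, transpose_sub,
      Matrix.sub_mul, Matrix.mul_sub, Matrix.mul_neg, Matrix.neg_mul, Matrix.mul_assoc]
    abel
  constructor
  · rw [hF, transpose_neg, transpose_mul, transpose_transpose, hEsym, Matrix.neg_mul,
      neg_neg, Matrix.mul_assoc, mul_nonsing_inv _ hdet, Matrix.mul_one]
  · intro Δ
    rw [hF, hG, key]
    constructor
    · intro h
      have := aux_zero hpd h
      exact sub_eq_zero.mp this
    · intro h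
      subst h
      simpa using Matrix.PosSemidef.zero (n := Fin n_x) (R := ℝ)
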